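/- Strict tightening of the upper bound: if i₀ ∉ A, w' i₀ > 0, and ∑ j, τ i₀ j * w j < C, then u(A ∪ {i₀}) < u(A). -/
import Mathlib


/-- Strict tightening of the simplification upper bound when adding an index
`i₀ ∉ A` with `w' i₀ > 0` and `∑ j, τ i₀ j * w j < C`:
`u(A ∪ {i₀}) < u(A)`. -/
theorem simplification_upper_bound_strict_tightening
    (m : ℕ) (hm : 1 ≤ m) (C : ℝ) (hC : 0 < C)
    (w w' ζ : Fin m → ℝ) (τ : Fin m → Fin m → ℝ)
    (hw : ∀ j, 0 ≤ w j) (hw' : ∀ i, 0 ≤ w' i)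
    (hwsum : ∑ j, w j = 1) (hw'sum : ∑ i, w' i = 1)
    (hζ : ∀ i, 0 < ζ i)
    (hτ : ∀ i j, 0 < τ i j) (hτC : ∀ i j, τ i j ≤ C)
    (A : Finset (Fin m)) (i₀ : Fin m) (hi₀ : i₀ ∉ A)
    (hwi₀ : 0 < w' i₀) (hlt : ∑ j, τ i₀ j * w j < C) :
    -Real.log (∑ i, ζ i * w i)
      + ∑ i ∈ (A ∪ {i₀})ᶜ, w' i * Real.log (C * ζ i)
      + ∑ i ∈ A ∪ {i₀}, w' i * Real.log (ζ i * ∑ j, τ i j * w j)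
    < -Real.log (∑ i, ζ i * w i)
      + ∑ i ∈ Aᶜ, w' i * Real.log (C * ζ i)
      + ∑ i ∈ A, w' i * Real.log (ζ i * ∑ j, τ i j * w j) := by
  have hS : 0 < ∑ j, τ i₀ j * w j := by
    obtain ⟨j, hj⟩ : ∃ j, 0 < w j := by
      by_contra h
      push_neg at h
      have : ∑ j, w j = 0 := Finset.sum_eq_zero fun j _ => le_antisymm (h j) (hw j)
      simp [this] at hwsum
    exact Finset.sum_pos' (fun k _ => mul_nonneg (hτ i₀ k).le (hw k))
      ⟨j, Finset.mem_univ j, mul_pos (hτ i₀ j) hj⟩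
  have hkey : w' i₀ * Real.log (ζ i₀ * ∑ j, τ i₀ j * w j)
      < w' i₀ * Real.log (C * ζ i₀) := by
    apply mul_lt_mul_of_pos_left _ hwi₀
    apply Real.log_lt_log (mul_pos (hζ i₀) hS)
    rw [mul_comm C (ζ i₀)]
    exact mul_lt_mul_of_pos_left hlt (hζ i₀)
  have h1 : A ∪ {i₀} = insert i₀ A := by ext x; simp [or_comm]
  have hi₀c : i₀ ∈ Aᶜ := Finset.mem_compl.mpr hi₀
  have h2 : ∑ i ∈ A ∪ {i₀}, w' i * Real.log (ζ i * ∑ j, τ i j * w j)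
      = w' i₀ * Real.log (ζ i₀ * ∑ j, τ i₀ j * w j)
        + ∑ i ∈ A, w' i * Real.log (ζ i * ∑ j, τ i j * w j) := by
    rw [h1, Finset.sum_insert hi₀]
  have h3 : ∑ i ∈ Aᶜ, w' i * Real.log (C * ζ i)
      = w' i₀ * Real.log (C * ζ i₀)
        + ∑ i ∈ (A ∪ {i₀})ᶜ, w' i * Real.log (C * ζ i) := by
    rw [h1, Finset.compl_insert, ← Finset.add_sum_erase _ _ hi₀c]
  rw [h2, h3]
  linarith
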